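/- For the ODE −w² + 2(wz − 1)w' − z²w'² − (4z + wz²)w'' = 0, rewritten on the region 4z + wz² ≠ 0 in the normalized form w'' + Bw'² + Cw' + D = 0 with A = 0, B = z²/(4z + wz²) = z/(4 + wz), C = −2(wz − 1)/(z(4 + wz)), D = w²/(z(4 + wz)), the Lie linearization invariants satisfy Ψ₁ = 54z/(4 + wz)³ and Ψ₂ = −72(−2 + wz)/(z(4 + wz)³); in particular the equation is not linearizable by point transformations. -/

import Mathlib

/-- Partial derivative in the first (`z`) slot. -/
noncomputable def pz (f : ℝ → ℝ → ℝ) : ℝ → ℝ → ℝ :=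
  fun z w => deriv (fun z' => f z' w) z

/-- Partial derivative in the second (`w`) slot. -/
noncomputable def pw (f : ℝ → ℝ → ℝ) : ℝ → ℝ → ℝ :=
  fun z w => deriv (fun w' => f z w') w

/-- Lie's first linearization invariant
`Ψ₁ = 3A_{zz} − 2B_{zw} + C_{ww} − 3(CA)_z + 3(DA)_w + (B²)_z + 3A·D_w − B·C_w`. -/
noncomputable def Ψ₁ (A B C D : ℝ → ℝ → ℝ) : ℝ → ℝ → ℝ := fun z w =>
  3 * pz (pz A) z w - 2 * pw (pz B) z w + pw (pw C) z w
    - 3 * pz (fun z w => C z w * A z w) z w + 3 * pw (fun z w => D z w * A z w) z w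
    + pz (fun z w => (B z w) ^ 2) z w + 3 * A z w * pw D z w - B z w * pw C z w

/-- Lie's second linearization invariant
`Ψ₂ = 3D_{ww} − 2C_{zw} + B_{zz} − 3(DA)_z + 3(DB)_w − (C²)_w − 3D·A_z + C·B_z`. -/
noncomputable def Ψ₂ (A B C D : ℝ → ℝ → ℝ) : ℝ → ℝ → ℝ := fun z w =>
  3 * pw (pw D) z w - 2 * pw (pz C) z w + pz (pz B) z w
    - 3 * pz (fun z w => D z w * A z w) z w + 3 * pw (fun z w => D z w * B z w) z w
    - pw (fun z w => (C z w) ^ 2) z w - 3 * D z w * pz A z w + C z w * pz B z w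

/-- Coefficients of the normalized form of the `L_{2,1}`-reduced ODE. -/
noncomputable def Bc : ℝ → ℝ → ℝ := fun z w => z / (4 + w * z)
noncomputable def Cc : ℝ → ℝ → ℝ := fun z w => -2 * (w * z - 1) / (z * (4 + w * z))
noncomputable def Dc : ℝ → ℝ → ℝ := fun z w => w ^ 2 / (z * (4 + w * z))

lemma hsz (z w : ℝ) : HasDerivAt (fun w' : ℝ => 4 + w' * z) z w := by
  simpa using ((hasDerivAt_id' (𝕜 := ℝ) w).mul_const z).const_add 4

lemma hsw (z w : ℝ) : HasDerivAt (fun z' : ℝ => 4 + w * z') w z := by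
  simpa using ((hasDerivAt_id' (𝕜 := ℝ) z).const_mul w).const_add 4

lemma pzBc (z w : ℝ) (hs : 4 + w * z ≠ 0) : pz Bc z w = 4 / (4 + w * z) ^ 2 := by
  have h := (hasDerivAt_id' (𝕜 := ℝ) z).fun_div (hsw z w) hs
  have h0 : pz Bc z w = deriv (fun z' : ℝ => z' / (4 + w * z')) z := rfl
  rw [h0, h.deriv]
  field_simp; ring

lemma pwCc (z w : ℝ) (hz : z ≠ 0) (hs : 4 + w * z ≠ 0) :
    pw Cc z w = -10 / (4 + w * z) ^ 2 := by
  have hn : HasDerivAt (fun w' : ℝ => -2 * (w' * z - 1)) (-2 * z) w := by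
    simpa using (((hasDerivAt_id' (𝕜 := ℝ) w).mul_const z).sub_const 1).const_mul (-2)
  have hd : HasDerivAt (fun w' : ℝ => z * (4 + w' * z)) (z * z) w := (hsz z w).const_mul z
  have h := hn.fun_div hd (mul_ne_zero hz hs)
  have h0 : pw Cc z w = deriv (fun w' : ℝ => -2 * (w' * z - 1) / (z * (4 + w' * z))) w := rfl
  rw [h0, h.deriv]
  field_simp; ring

lemma pwDc (z w : ℝ) (hz : z ≠ 0) (hs : 4 + w * z ≠ 0) :
    pw Dc z w = (8 * w + w ^ 2 * z) / (z * (4 + w * z) ^ 2) := by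
  have hn : HasDerivAt (fun w' : ℝ => w' ^ 2) (2 * w) w := by
    simpa using hasDerivAt_pow 2 w
  have hd : HasDerivAt (fun w' : ℝ => z * (4 + w' * z)) (z * z) w := (hsz z w).const_mul z
  have h := hn.fun_div hd (mul_ne_zero hz hs)
  have h0 : pw Dc z w = deriv (fun w' : ℝ => w' ^ 2 / (z * (4 + w' * z))) w := rfl
  rw [h0, h.deriv]
  field_simp; ring

lemma pzCc (z w : ℝ) (hz : z ≠ 0) (hs : 4 + w * z ≠ 0) :
    pz Cc z w = (2 * w ^ 2 * z ^ 2 - 4 * w * z - 8) / (z ^ 2 * (4 + w * z) ^ 2) := by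
  have hn : HasDerivAt (fun z' : ℝ => -2 * (w * z' - 1)) (-2 * w) z := by
    simpa using (((hasDerivAt_id' (𝕜 := ℝ) z).const_mul w).sub_const 1).const_mul (-2)
  have hd : HasDerivAt (fun z' : ℝ => z' * (4 + w * z')) (1 * (4 + w * z) + z * w) z :=
    (hasDerivAt_id' (𝕜 := ℝ) z).fun_mul (hsw z w)
  have h := hn.fun_div hd (mul_ne_zero hz hs)
  have h0 : pz Cc z w = deriv (fun z' : ℝ => -2 * (w * z' - 1) / (z' * (4 + w * z'))) z := rfl
  rw [h0, h.deriv]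
  field_simp; ring

lemma ev_w (z w : ℝ) (hs : 4 + w * z ≠ 0) : ∀ᶠ w' in nhds w, 4 + w' * z ≠ 0 := by
  have : ContinuousAt (fun w' : ℝ => 4 + w' * z) w := by fun_prop
  exact this.eventually_ne hs

lemma ev_z (z w : ℝ) (hs : 4 + w * z ≠ 0) : ∀ᶠ z' in nhds z, 4 + w * z' ≠ 0 := by
  have : ContinuousAt (fun z' : ℝ => 4 + w * z') z := by fun_prop
  exact this.eventually_ne hs

lemma pwpzBc (z w : ℝ) (hs : 4 + w * z ≠ 0) :
    pw (pz Bc) z w = -8 * z / (4 + w * z) ^ 3 := by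
  have he : (fun w' => pz Bc z w') =ᶠ[nhds w] fun w' => 4 / (4 + w' * z) ^ 2 :=
    (ev_w z w hs).mono fun w' h => pzBc z w' h
  have h := (hasDerivAt_const w (4:ℝ)).fun_div ((hsz z w).fun_pow 2) (pow_ne_zero 2 hs)
  have h0 : pw (pz Bc) z w = deriv (fun w' => pz Bc z w') w := rfl
  rw [h0, he.deriv_eq, h.deriv]
  field_simp; ring

lemma pzpzBc (z w : ℝ) (hs : 4 + w * z ≠ 0) :
    pz (pz Bc) z w = -8 * w / (4 + w * z) ^ 3 := by
  have he : (fun z' => pz Bc z' w) =ᶠ[nhds z] fun z' => 4 / (4 + w * z') ^ 2 :=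
    (ev_z z w hs).mono fun z' h => pzBc z' w h
  have h := (hasDerivAt_const z (4:ℝ)).fun_div ((hsw z w).fun_pow 2) (pow_ne_zero 2 hs)
  have h0 : pz (pz Bc) z w = deriv (fun z' => pz Bc z' w) z := rfl
  rw [h0, he.deriv_eq, h.deriv]
  field_simp; ring

lemma pwpwCc (z w : ℝ) (hz : z ≠ 0) (hs : 4 + w * z ≠ 0) :
    pw (pw Cc) z w = 20 * z / (4 + w * z) ^ 3 := by
  have he : (fun w' => pw Cc z w') =ᶠ[nhds w] fun w' => -10 / (4 + w' * z) ^ 2 :=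
    (ev_w z w hs).mono fun w' h => pwCc z w' hz h
  have h := (hasDerivAt_const w (-10:ℝ)).fun_div ((hsz z w).fun_pow 2) (pow_ne_zero 2 hs)
  have h0 : pw (pw Cc) z w = deriv (fun w' => pw Cc z w') w := rfl
  rw [h0, he.deriv_eq, h.deriv]
  field_simp; ring

lemma pwpzCc (z w : ℝ) (hz : z ≠ 0) (hs : 4 + w * z ≠ 0) :
    pw (pz Cc) z w = 20 * w / (4 + w * z) ^ 3 := by
  have he : (fun w' => pz Cc z w') =ᶠ[nhds w]
      fun w' => (2 * w' ^ 2 * z ^ 2 - 4 * w' * z - 8) / (z ^ 2 * (4 + w' * z) ^ 2) :=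
    (ev_w z w hs).mono fun w' h => pzCc z w' hz h
  have hn : HasDerivAt (fun w' : ℝ => 2 * w' ^ 2 * z ^ 2 - 4 * w' * z - 8)
      (2 * (2 * w) * z ^ 2 - 4 * z) w := by
    have h1 : HasDerivAt (fun w' : ℝ => 2 * w' ^ 2 * z ^ 2) (2 * (2 * w) * z ^ 2) w := by
      have := ((hasDerivAt_pow 2 w).const_mul 2).mul_const (z ^ 2)
      simp only [Nat.cast_ofNat, Nat.reduceSub, pow_one] at this
      convert this using 2 <;> ring
    have h2 : HasDerivAt (fun w' : ℝ => 4 * w' * z) (4 * z) w := by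
      simpa [mul_assoc] using ((hasDerivAt_id' (𝕜 := ℝ) w).const_mul 4).mul_const z
    simpa using (h1.fun_sub h2).sub_const 8
  have hd : HasDerivAt (fun w' : ℝ => z ^ 2 * (4 + w' * z) ^ 2)
      (z ^ 2 * (2 * (4 + w * z) * z)) w := by
    have := ((hsz z w).fun_pow 2).const_mul (z ^ 2)
    simp only [Nat.cast_ofNat, Nat.reduceSub, pow_one] at this
    convert this using 1 <;> ring
  have h := hn.fun_div hd (mul_ne_zero (pow_ne_zero 2 hz) (pow_ne_zero 2 hs))
  have h0 : pw (pz Cc) z w = deriv (fun w' => pz Cc z w') w := rfl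
  rw [h0, he.deriv_eq, h.deriv]
  field_simp; ring

lemma pwpwDc (z w : ℝ) (hz : z ≠ 0) (hs : 4 + w * z ≠ 0) :
    pw (pw Dc) z w = 32 / (z * (4 + w * z) ^ 3) := by
  have he : (fun w' => pw Dc z w') =ᶠ[nhds w]
      fun w' => (8 * w' + w' ^ 2 * z) / (z * (4 + w' * z) ^ 2) :=
    (ev_w z w hs).mono fun w' h => pwDc z w' hz h
  have hn : HasDerivAt (fun w' : ℝ => 8 * w' + w' ^ 2 * z) (8 + 2 * w * z) w := by
    have h1 : HasDerivAt (fun w' : ℝ => 8 * w') (8:ℝ) w := by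
      simpa using (hasDerivAt_id' (𝕜 := ℝ) w).const_mul 8
    have h2 : HasDerivAt (fun w' : ℝ => w' ^ 2 * z) (2 * w * z) w := by
      simpa using (hasDerivAt_pow 2 w).mul_const z
    simpa using h1.fun_add h2
  have hd : HasDerivAt (fun w' : ℝ => z * (4 + w' * z) ^ 2) (z * (2 * (4 + w * z) * z)) w := by
    have := ((hsz z w).fun_pow 2).const_mul z
    simp only [Nat.cast_ofNat, Nat.reduceSub, pow_one] at this
    convert this using 1 <;> ring
  have h := hn.fun_div hd (mul_ne_zero hz (pow_ne_zero 2 hs))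
  have h0 : pw (pw Dc) z w = deriv (fun w' => pw Dc z w') w := rfl
  rw [h0, he.deriv_eq, h.deriv]
  field_simp; ring

lemma pzBc2 (z w : ℝ) (hs : 4 + w * z ≠ 0) :
    pz (fun z w => (Bc z w) ^ 2) z w = 8 * z / (4 + w * z) ^ 3 := by
  have h := ((hasDerivAt_id' (𝕜 := ℝ) z).fun_div (hsw z w) hs).fun_pow 2
  simp only [Nat.cast_ofNat, Nat.reduceSub, pow_one] at h
  have h0 : pz (fun z w => (Bc z w) ^ 2) z w
      = deriv (fun z' : ℝ => (z' / (4 + w * z')) ^ 2) z := rfl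
  rw [h0, h.deriv]
  field_simp; ring

lemma pwCc2 (z w : ℝ) (hz : z ≠ 0) (hs : 4 + w * z ≠ 0) :
    pw (fun z w => (Cc z w) ^ 2) z w = (40 * w * z - 40) / (z * (4 + w * z) ^ 3) := by
  have hn : HasDerivAt (fun w' : ℝ => -2 * (w' * z - 1)) (-2 * z) w := by
    simpa using (((hasDerivAt_id' (𝕜 := ℝ) w).mul_const z).sub_const 1).const_mul (-2)
  have hd : HasDerivAt (fun w' : ℝ => z * (4 + w' * z)) (z * z) w := (hsz z w).const_mul z
  have h := (hn.fun_div hd (mul_ne_zero hz hs)).fun_pow 2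
  simp only [Nat.cast_ofNat, Nat.reduceSub, pow_one] at h
  have h0 : pw (fun z w => (Cc z w) ^ 2) z w
      = deriv (fun w' : ℝ => (-2 * (w' * z - 1) / (z * (4 + w' * z))) ^ 2) w := rfl
  rw [h0, h.deriv]
  field_simp; ring

lemma pwDcBc (z w : ℝ) (hz : z ≠ 0) (hs : 4 + w * z ≠ 0) :
    pw (fun z w => Dc z w * Bc z w) z w = 8 * w / (4 + w * z) ^ 3 := by
  have hn : HasDerivAt (fun w' : ℝ => w' ^ 2) (2 * w) w := by
    simpa using hasDerivAt_pow 2 w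
  have hd : HasDerivAt (fun w' : ℝ => z * (4 + w' * z)) (z * z) w := (hsz z w).const_mul z
  have h1 := hn.fun_div hd (mul_ne_zero hz hs)
  have h2 := (hasDerivAt_const w z).fun_div (hsz z w) hs
  have h := h1.fun_mul h2
  have h0 : pw (fun z w => Dc z w * Bc z w) z w
      = deriv (fun w' : ℝ => w' ^ 2 / (z * (4 + w' * z)) * (z / (4 + w' * z))) w := rfl
  rw [h0, h.deriv]
  field_simp; ring

lemma pz_zero : pz (fun _ _ => (0:ℝ)) = fun _ _ => 0 := by
  funext z w; simp [pz]

lemma pw_zero : pw (fun _ _ => (0:ℝ)) = fun _ _ => 0 := by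
  funext z w; simp [pw]

theorem linearization_test_L21 :
    (∀ z w : ℝ, z ≠ 0 → 4 + w * z ≠ 0 →
        Ψ₁ (fun _ _ => 0) Bc Cc Dc z w = 54 * z / (4 + w * z) ^ 3 ∧
        Ψ₂ (fun _ _ => 0) Bc Cc Dc z w
          = -72 * (-2 + w * z) / (z * (4 + w * z) ^ 3)) ∧
      ¬ (∀ z w : ℝ, z ≠ 0 → 4 + w * z ≠ 0 →
          Ψ₁ (fun _ _ => 0) Bc Cc Dc z w = 0 ∧
          Ψ₂ (fun _ _ => 0) Bc Cc Dc z w = 0) := by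
  have main : ∀ z w : ℝ, z ≠ 0 → 4 + w * z ≠ 0 →
      Ψ₁ (fun _ _ => 0) Bc Cc Dc z w = 54 * z / (4 + w * z) ^ 3 ∧
      Ψ₂ (fun _ _ => 0) Bc Cc Dc z w = -72 * (-2 + w * z) / (z * (4 + w * z) ^ 3) := by
    intro z w hz hs
    constructor
    · simp only [Ψ₁, mul_zero, zero_mul, pz_zero, pw_zero,
        pwpzBc z w hs, pwpwCc z w hz hs, pzBc2 z w hs, pwCc z w hz hs]
      simp only [pz_zero, pw_zero, Bc]
      field_simp
      ring
    · simp only [Ψ₂, mul_zero, zero_mul, pz_zero, pw_zero,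
        pwpwDc z w hz hs, pwpzCc z w hz hs, pzpzBc z w hs, pwDcBc z w hz hs,
        pwCc2 z w hz hs, pzBc z w hs]
      simp only [pz_zero, pw_zero, Cc, Dc]
      field_simp
      ring
  refine ⟨main, fun h => ?_⟩
  have h1 := (h 1 0 one_ne_zero (by norm_num)).1
  have h2 := (main 1 0 one_ne_zero (by norm_num)).1
  rw [h1] at h2
  norm_num at h2
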